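/- Recurrence for the pmf polynomials: with P_n(λ) = Σ_{n₁+2n₂+...+k·n_k = n} λ^{n₁+...+n_k}/(n₁!···n_k!), one has the recurrence n·P_n(λ) = λ Σ_{i=1}^{min(n,k)} i·P_{n−i}(λ) for n ≥ 1, with P_0(λ) = 1. -/

import Mathlib

open Finset

noncomputable def poissonOrderKSum (k n : ℕ) (x : ℝ) : ℝ :=
  ∑ f ∈ ((Fintype.piFinset fun _ : Fin k => Finset.range (n + 1)).filter
      fun f => ∑ i : Fin k, (i.1 + 1) * f i = n),
    x ^ (∑ i : Fin k, f i) / ∏ i : Fin k, (Nat.factorial (f i) : ℝ)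

namespace PoissonAux

def S (k n : ℕ) : Finset (Fin k → ℕ) :=
  (Fintype.piFinset fun _ : Fin k => Finset.range (n + 1)).filter
      fun f => ∑ i : Fin k, (i.1 + 1) * f i = n

lemma poisson_eq (k n : ℕ) (x : ℝ) :
    poissonOrderKSum k n x =
      ∑ f ∈ S k n, x ^ (∑ i : Fin k, f i) / ∏ i : Fin k, (Nat.factorial (f i) : ℝ) := rfl

variable {k : ℕ}

lemma memS_iff {n : ℕ} {f : Fin k → ℕ} :
    f ∈ S k n ↔ ∑ i : Fin k, (i.1 + 1) * f i = n := by
  simp only [S, mem_filter, Fintype.mem_piFinset, mem_range, and_iff_right_iff_imp]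
  intro h i
  have h1 : f i ≤ (i.1 + 1) * f i := Nat.le_mul_of_pos_left _ (Nat.succ_pos _)
  have h2 : (i.1 + 1) * f i ≤ ∑ j : Fin k, (j.1 + 1) * f j :=
    Finset.single_le_sum (f := fun j => (j.1 + 1) * f j) (fun j _ => Nat.zero_le _) (mem_univ i)
  omega

lemma sum_comp_update {M : Type*} [AddCommMonoid M] (F : Fin k → ℕ → M)
    (g : Fin k → ℕ) (i : Fin k) (a : ℕ) :
    ∑ j : Fin k, F j (Function.update g i a j) = F i a + ∑ j ∈ univ.erase i, F j (g j) := by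
  simp only [Function.apply_update F g i a]
  rw [Finset.sum_update_of_mem (mem_univ i), Finset.sdiff_singleton_eq_erase]

lemma prod_comp_update {M : Type*} [CommMonoid M] (F : Fin k → ℕ → M)
    (g : Fin k → ℕ) (i : Fin k) (a : ℕ) :
    ∏ j : Fin k, F j (Function.update g i a j) = F i a * ∏ j ∈ univ.erase i, F j (g j) := by
  simp only [Function.apply_update F g i a]
  rw [Finset.prod_update_of_mem (mem_univ i), Finset.sdiff_singleton_eq_erase]

lemma inner_sum (n : ℕ) (i : Fin k) (x : ℝ) (hn : i.1 + 1 ≤ n) :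
    ∑ f ∈ S k n, (f i : ℝ) * (x ^ (∑ j : Fin k, f j) / ∏ j : Fin k, (Nat.factorial (f j) : ℝ))
      = x * poissonOrderKSum k (n - (i.1 + 1)) x := by
  rw [poisson_eq, Finset.mul_sum]
  rw [← Finset.sum_filter_of_ne (p := fun f => f i ≠ 0)
    (fun f _ h hf => h (by simp [hf]))]
  refine Finset.sum_nbij' (i := fun f => Function.update f i (f i - 1))
    (j := fun g => Function.update g i (g i + 1)) ?_ ?_ ?_ ?_ ?_
  · intro f hf
    simp only [mem_filter, memS_iff] at hf
    obtain ⟨hw, hfi⟩ := hf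
    obtain ⟨m, hm⟩ : ∃ m, f i = m + 1 := ⟨f i - 1, by omega⟩
    rw [memS_iff, sum_comp_update (fun j v => (j.1 + 1) * v)]
    have hsplit := Finset.add_sum_erase univ (fun j : Fin k => (j.1 + 1) * f j) (mem_univ i)
    rw [hw] at hsplit
    rw [hm] at hsplit ⊢
    simp only [Nat.add_sub_cancel, Nat.mul_succ] at hsplit ⊢
    omega
  · intro g hg
    rw [memS_iff] at hg
    simp only [mem_filter, memS_iff]
    have hsplit := Finset.add_sum_erase univ (fun j : Fin k => (j.1 + 1) * g j) (mem_univ i)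
    rw [hg] at hsplit
    constructor
    · rw [sum_comp_update (fun j v => (j.1 + 1) * v), Nat.mul_succ]
      omega
    · simp
  · intro f hf
    simp only [mem_filter, memS_iff] at hf
    funext j
    rcases eq_or_ne j i with rfl | hj
    · simp only [Function.update_self]
      omega
    · simp [Function.update_of_ne hj]
  · intro g hg
    funext j
    rcases eq_or_ne j i with rfl | hj
    · simp [Function.update_self]
    · simp [Function.update_of_ne hj]
  · intro f hf
    simp only [mem_filter, memS_iff] at hf
    obtain ⟨hw, hfi⟩ := hf
    have hpos : 0 < f i := Nat.pos_of_ne_zero hfi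
    obtain ⟨m, hm⟩ : ∃ m, f i = m + 1 := ⟨f i - 1, by omega⟩
    have hsum : ∑ j : Fin k, f j = (∑ j : Fin k, Function.update f i (f i - 1) j) + 1 := by
      rw [sum_comp_update (fun _ v => v)]
      have h2 := Finset.add_sum_erase univ (fun j : Fin k => f j) (mem_univ i)
      omega
    have hprod : ∏ j : Fin k, (Nat.factorial (f j) : ℝ) =
        (f i : ℝ) * ∏ j : Fin k, (Nat.factorial (Function.update f i (f i - 1) j) : ℝ) := by
      rw [prod_comp_update (fun _ v => (Nat.factorial v : ℝ))]
      rw [← Finset.mul_prod_erase _ (fun j : Fin k => (Nat.factorial (f j) : ℝ)) (mem_univ i),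
        ← mul_assoc]
      congr 1
      rw [← Nat.cast_mul]
      congr 1
      rw [hm]
      simp [Nat.factorial_succ]
    have hP : (0:ℝ) < ∏ j : Fin k, (Nat.factorial (Function.update f i (f i - 1) j) : ℝ) :=
      Finset.prod_pos fun j _ => by positivity
    rw [hsum, hprod, pow_succ]
    have hfi' : (f i : ℝ) ≠ 0 := Nat.cast_ne_zero.mpr hfi
    field_simp

lemma inner_sum_zero (n : ℕ) (i : Fin k) (x : ℝ) (hn : n < i.1 + 1) :
    ∑ f ∈ S k n, (f i : ℝ) * (x ^ (∑ j : Fin k, f j) / ∏ j : Fin k, (Nat.factorial (f j) : ℝ))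
      = 0 := by
  refine Finset.sum_eq_zero fun f hf => ?_
  rw [memS_iff] at hf
  have h2 : (i.1 + 1) * f i ≤ n := hf ▸
    Finset.single_le_sum (f := fun j => (j.1 + 1) * f j) (fun j _ => Nat.zero_le _) (mem_univ i)
  have hz : f i = 0 := by
    rcases Nat.eq_zero_or_pos (f i) with h | h
    · exact h
    · have := Nat.le_mul_of_pos_right (i.1 + 1) h
      omega
  simp [hz]

end PoissonAux

open PoissonAux in
theorem poissonOrderK_recurrence (k : ℕ) (hk : 1 ≤ k) (lam : ℝ) :
    poissonOrderKSum k 0 lam = 1 ∧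
    ∀ n : ℕ, 1 ≤ n →
      (n : ℝ) * poissonOrderKSum k n lam =
        lam * ∑ i ∈ Finset.Icc 1 (min n k), (i : ℝ) * poissonOrderKSum k (n - i) lam := by
  constructor
  · rw [poisson_eq]
    have hS : S k 0 = {fun _ => 0} := by
      ext f
      rw [memS_iff, Finset.mem_singleton]
      constructor
      · intro h
        funext i
        have := (Finset.sum_eq_zero_iff.mp h) i (mem_univ i)
        exact (Nat.mul_eq_zero.mp this).resolve_left (Nat.succ_ne_zero _)
      · rintro rfl; simp
    rw [hS]
    simp
  · intro n hn
    have lhs_eq : (n : ℝ) * poissonOrderKSum k n lam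
        = ∑ i : Fin k, (i.1 + 1 : ℝ) *
            ∑ f ∈ S k n, (f i : ℝ) * (lam ^ (∑ j : Fin k, f j) / ∏ j : Fin k, (Nat.factorial (f j) : ℝ)) := by
      rw [poisson_eq, Finset.mul_sum]
      have step1 : ∀ f ∈ S k n,
          (n : ℝ) * (lam ^ (∑ i : Fin k, f i) / ∏ i : Fin k, (Nat.factorial (f i) : ℝ))
          = ∑ i : Fin k, (i.1 + 1 : ℝ) * ((f i : ℝ) *
              (lam ^ (∑ j : Fin k, f j) / ∏ j : Fin k, (Nat.factorial (f j) : ℝ))) := by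
        intro f hf
        rw [memS_iff] at hf
        have hcast : (n : ℝ) = ∑ i : Fin k, ((i.1 : ℝ) + 1) * (f i : ℝ) := by
          rw [← hf]; push_cast; ring
        rw [hcast, Finset.sum_mul]
        exact Finset.sum_congr rfl fun i _ => by ring
      rw [Finset.sum_congr rfl step1, Finset.sum_comm]
      exact Finset.sum_congr rfl fun i _ => (Finset.mul_sum _ _ _).symm
    rw [lhs_eq]
    have hIcc : Finset.Icc 1 (min n k) = (Finset.Icc 1 k).filter (fun i => i ≤ n) := by
      ext a
      simp only [Finset.mem_Icc, Finset.mem_filter]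
      omega
    rw [hIcc, Finset.sum_filter, ← Finset.Ico_add_one_right_eq_Icc, Finset.sum_Ico_eq_sum_range]
    simp only [Nat.add_sub_cancel]
    rw [← Fin.sum_univ_eq_sum_range
      (fun j => if 1 + j ≤ n then ((1 + j : ℕ) : ℝ) * poissonOrderKSum k (n - (1 + j)) lam else 0) k,
      Finset.mul_sum]
    apply Finset.sum_congr rfl
    intro i _
    have h1 : 1 + i.1 = i.1 + 1 := Nat.add_comm _ _
    rw [h1]
    by_cases hle : i.1 + 1 ≤ n
    · rw [if_pos hle, inner_sum _ _ _ hle]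
      push_cast
      ring
    · rw [if_neg hle, inner_sum_zero _ _ _ (by omega)]
      simp
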